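/- Let H be a nontrivial finite cyclic group, let A be a commutative ring that is a ℚ-algebra, and write A_ℂ = ℂ ⊗_ℚ A. Let m ≥ 1, let x_1, …, x_m be nilpotent elements of A, and let φ_1, …, φ_m : H → ℂˣ be nontrivial group homomorphisms. Set K = {h ∈ H : φ_j(h) = 1 for some j ∈ {1,…,m}}. Then there exists a unique family (a_χ), indexed by the group homomorphisms χ : H → ℂˣ, of elements a_χ ∈ A, such that: (1) for every h ∈ K, Σ_χ a_χ·χ(h) = 0 in A_ℂ; and (2) for every h ∈ H ∖ K, (Σ_χ a_χ·χ(h)) · Π_{j=1}^m (1 − φ_j(h)·exp(x_j)) = 1 in A_ℂ. Here exp(x) denotes the finite sum Σ_{k≥0} x^k/k! (well defined since x is nilpotent, as A is a ℚ-algebra), elements of A and of ℂ are regarded inside A_ℂ via a ↦ 1⊗a and z ↦ z⊗1, and for h ∈ H ∖ K each factor 1 − φ_j(h)·exp(x_j) is invertible in A_ℂ because 1 − φ_j(h) ≠ 0 and x_j is nilpotent. -/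

import Mathlib

open scoped TensorProduct
open Finset Polynomial

namespace PartialInverseAux

variable {H : Type*} [Group H] [Fintype H] {A : Type*} [CommRing A] [Algebra ℚ A]

lemma finite_char : Finite (H →* ℂˣ) := by
  haveI : NeZero (Fintype.card H) := ⟨Fintype.card_ne_zero⟩
  let f : (H →* ℂˣ) → (H → rootsOfUnity (Fintype.card H) ℂ) := fun χ h =>
    ⟨χ h, by rw [mem_rootsOfUnity, ← map_pow, pow_card_eq_one, map_one]⟩
  have hf : Function.Injective f := by
    intro χ χ' hh
    ext h
    have := congrFun hh h
    exact congrArg (fun z => ((z : ℂˣ) : ℂ)) (Subtype.ext_iff.mp this)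
  exact Finite.of_injective f hf

section WithFintype

variable [Fintype (H →* ℂˣ)]

noncomputable def T (a : (H →* ℂˣ) → A) (h : H) : ℂ ⊗[ℚ] A :=
  ∑ χ : H →* ℂˣ, (((χ h : ℂˣ) : ℂ) ⊗ₜ[ℚ] a χ)

open scoped Classical in
noncomputable def delta : (H →* ℂˣ) → A := fun χ => if χ = 1 then 1 else 0

lemma T_delta (h : H) : T (delta : (H →* ℂˣ) → A) h = 1 := by
  classical
  have : T (delta : (H →* ℂˣ) → A) h
      = (((1 : H →* ℂˣ) h : ℂˣ) : ℂ) ⊗ₜ[ℚ] (delta (1 : H →* ℂˣ) : A) := by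
    refine Finset.sum_eq_single _ (fun χ _ hχ => ?_) (by simp)
    simp [delta, hχ]
  rw [this]
  simp [delta, Algebra.TensorProduct.one_def]

lemma T_sum {ι : Type*} (s : Finset ι) (f : ι → (H →* ℂˣ) → A) (h : H) :
    T (fun χ => ∑ k ∈ s, f k χ) h = ∑ k ∈ s, T (f k) h := by
  unfold T
  simp only [TensorProduct.tmul_sum]
  exact Finset.sum_comm

lemma T_mulRight (a : (H →* ℂˣ) → A) (r : A) (h : H) :
    T (fun χ => a χ * r) h = T a h * ((1 : ℂ) ⊗ₜ[ℚ] r) := by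
  unfold T
  rw [Finset.sum_mul]
  refine Finset.sum_congr rfl fun χ _ => ?_
  rw [Algebra.TensorProduct.tmul_mul_tmul, mul_one]

lemma T_sub (a b : (H →* ℂˣ) → A) (h : H) :
    T (fun χ => a χ - b χ) h = T a h - T b h := by
  unfold T
  rw [← Finset.sum_sub_distrib]
  refine Finset.sum_congr rfl fun χ _ => ?_
  rw [TensorProduct.tmul_sub]

noncomputable def conv (a b : (H →* ℂˣ) → A) : (H →* ℂˣ) → A :=
  fun χ => ∑ ψ : H →* ℂˣ, a ψ * b (ψ⁻¹ * χ)

lemma T_conv (a b : (H →* ℂˣ) → A) (h : H) : T (conv a b) h = T a h * T b h := by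
  unfold T conv
  rw [Finset.sum_mul_sum]
  simp only [TensorProduct.tmul_sum]
  rw [Finset.sum_comm]
  refine Finset.sum_congr rfl fun ψ _ => ?_
  rw [← Equiv.sum_comp (Equiv.mulLeft ψ)
    (fun χ => (((χ h : ℂˣ) : ℂ) ⊗ₜ[ℚ] (a ψ * b (ψ⁻¹ * χ))))]
  refine Finset.sum_congr rfl fun ρ _ => ?_
  simp only [Equiv.coe_mulLeft]
  rw [show ψ⁻¹ * (ψ * ρ) = ρ from inv_mul_cancel_left ψ ρ,
    Algebra.TensorProduct.tmul_mul_tmul]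
  simp

open scoped Classical in
noncomputable def fam (ψ : H →* ℂˣ) (P : Polynomial ℚ) : (H →* ℂˣ) → A :=
  fun χ => ∑ r ∈ Finset.range (P.natDegree + 1),
    if ψ ^ r = χ then algebraMap ℚ A (P.coeff r) else 0

lemma T_fam (ψ : H →* ℂˣ) (P : Polynomial ℚ) (h : H) :
    T (fam ψ P : (H →* ℂˣ) → A) h
      = ((Polynomial.aeval ((ψ h : ℂˣ) : ℂ)) P) ⊗ₜ[ℚ] (1 : A) := by
  classical
  unfold T fam
  simp only [TensorProduct.tmul_sum]
  rw [Finset.sum_comm, Polynomial.aeval_eq_sum_range, TensorProduct.sum_tmul]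
  refine Finset.sum_congr rfl fun r _ => ?_
  have step : ∀ χ : H →* ℂˣ,
      (((χ h : ℂˣ) : ℂ) ⊗ₜ[ℚ] (if ψ ^ r = χ then algebraMap ℚ A (P.coeff r) else 0))
      = if ψ ^ r = χ then (((χ h : ℂˣ) : ℂ) ⊗ₜ[ℚ] algebraMap ℚ A (P.coeff r)) else 0 := by
    intro χ; split <;> simp
  rw [Finset.sum_congr rfl fun χ _ => step χ, Finset.sum_ite_eq]
  simp only [Finset.mem_univ, if_true]
  rw [Algebra.algebraMap_eq_smul_one, ← TensorProduct.smul_tmul]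
  norm_cast

lemma sum_char_eq_zero (ψ : H →* ℂˣ) (hψ : ψ ≠ 1) :
    ∑ h : H, ((ψ h : ℂˣ) : ℂ) = 0 := by
  obtain ⟨h₀, hh₀⟩ : ∃ h₀, ψ h₀ ≠ 1 := by
    by_contra hc
    push_neg at hc
    exact hψ (MonoidHom.ext fun h => (hc h).trans rfl)
  have key : ((ψ h₀ : ℂˣ) : ℂ) * ∑ h : H, ((ψ h : ℂˣ) : ℂ) = ∑ h : H, ((ψ h : ℂˣ) : ℂ) := by
    rw [Finset.mul_sum]
    exact Fintype.sum_equiv (Equiv.mulLeft h₀) _ _ (fun h => by simp [map_mul])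
  have h2 : (((ψ h₀ : ℂˣ) : ℂ) - 1) * ∑ h : H, ((ψ h : ℂˣ) : ℂ) = 0 := by
    rw [sub_mul, one_mul, key, sub_self]
  rcases mul_eq_zero.1 h2 with h | h
  · exact absurd (Units.ext (by rw [sub_eq_zero] at h; simpa using h)) hh₀
  · exact h

lemma tmul_one_injective : Function.Injective (fun a : A => (1 : ℂ) ⊗ₜ[ℚ] a) := by
  have hker : LinearMap.ker (Algebra.linearMap ℚ ℂ) = ⊥ := by
    rw [LinearMap.ker_eq_bot]
    intro p q hpq
    exact (algebraMap ℚ ℂ).injective (by simpa using hpq)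
  obtain ⟨g, hg⟩ := (Algebra.linearMap ℚ ℂ).exists_leftInverse_of_injective hker
  have hg1 : g (1 : ℂ) = 1 := by
    have := LinearMap.congr_fun hg 1
    simpa using this
  intro a b hab
  have := congrArg (fun z => (TensorProduct.lid ℚ A)
    ((TensorProduct.map g (LinearMap.id : A →ₗ[ℚ] A)) z)) hab
  simpa [hg1] using this

lemma T_eq_zero (b : (H →* ℂˣ) → A) (hb : ∀ h, T b h = 0) : b = 0 := by
  classical
  funext χ₀
  have key : ∑ h : H, ((((χ₀ h)⁻¹ : ℂˣ) : ℂ) ⊗ₜ[ℚ] (1 : A)) * T b h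
      = ((Fintype.card H : ℂ)) ⊗ₜ[ℚ] b χ₀ := by
    unfold T
    have expand : ∀ h : H, ((((χ₀ h)⁻¹ : ℂˣ) : ℂ) ⊗ₜ[ℚ] (1 : A)) *
        ∑ χ : H →* ℂˣ, (((χ h : ℂˣ) : ℂ) ⊗ₜ[ℚ] b χ)
        = ∑ χ : H →* ℂˣ, ((((χ₀⁻¹ * χ) h : ℂˣ) : ℂ) ⊗ₜ[ℚ] b χ) := by
      intro h
      rw [Finset.mul_sum]
      refine Finset.sum_congr rfl fun χ _ => ?_
      rw [Algebra.TensorProduct.tmul_mul_tmul, one_mul]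
      simp
    rw [Finset.sum_congr rfl fun h _ => expand h, Finset.sum_comm]
    have collapse : ∀ χ : H →* ℂˣ,
        ∑ h : H, ((((χ₀⁻¹ * χ) h : ℂˣ) : ℂ) ⊗ₜ[ℚ] b χ)
        = (∑ h : H, (((χ₀⁻¹ * χ) h : ℂˣ) : ℂ)) ⊗ₜ[ℚ] b χ := by
      intro χ; rw [TensorProduct.sum_tmul]
    rw [Finset.sum_congr rfl fun χ _ => collapse χ]
    refine (Finset.sum_eq_single χ₀ (fun χ _ hχ => ?_) (by simp)).trans ?_
    · have : (χ₀⁻¹ * χ : H →* ℂˣ) ≠ 1 := by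
        intro hcon
        exact hχ (inv_mul_eq_one.mp hcon).symm
      rw [sum_char_eq_zero _ this, TensorProduct.zero_tmul]
    · congr 1
      simp
  have hz : ((Fintype.card H : ℂ)) ⊗ₜ[ℚ] b χ₀ = 0 := by
    rw [← key]
    exact Finset.sum_eq_zero fun h _ => by rw [hb h, mul_zero]
  have hsmul : ((Fintype.card H : ℚ)) • ((1 : ℂ) ⊗ₜ[ℚ] b χ₀) = 0 := by
    rw [TensorProduct.smul_tmul', Rat.smul_def, mul_one,
      show (((Fintype.card H : ℚ)) : ℂ) = ((Fintype.card H : ℂ)) by norm_cast]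
    exact hz
  have hc0 : (Fintype.card H : ℚ) ≠ 0 := by
    exact_mod_cast Fintype.card_ne_zero
  have h1 : (1 : ℂ) ⊗ₜ[ℚ] b χ₀ = 0 := by
    have := congrArg (fun w => ((Fintype.card H : ℚ))⁻¹ • w) hsmul
    simpa [smul_smul, inv_mul_cancel₀ hc0] using this
  have h2 : (1 : ℂ) ⊗ₜ[ℚ] b χ₀ = (1 : ℂ) ⊗ₜ[ℚ] (0 : A) := by
    rw [h1, TensorProduct.tmul_zero]
  have h3 : b χ₀ = (0 : A) := tmul_one_injective (A := A) h2
  simpa using h3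

lemma exists_T_prod {m : ℕ} (b : Fin m → ((H →* ℂˣ) → A)) :
    ∃ a : (H →* ℂˣ) → A, ∀ h, T a h = ∏ j, T (b j) h := by
  classical
  suffices hs : ∀ s : Finset (Fin m), ∃ a : (H →* ℂˣ) → A,
      ∀ h, T a h = ∏ j ∈ s, T (b j) h from hs Finset.univ
  intro s
  induction s using Finset.induction_on with
  | empty => exact ⟨delta, fun h => by simpa using T_delta h⟩
  | @insert j s hj ih =>
    obtain ⟨a, ha⟩ := ih
    exact ⟨conv (b j) a, fun h => by rw [T_conv, ha, Finset.prod_insert hj]⟩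

end WithFintype

lemma exists_poly_ind (d : ℕ) (hd : d ≠ 0) :
    ∃ P : Polynomial ℚ, (Polynomial.aeval (1 : ℂ)) P = 0 ∧
      ∀ ζ : ℂ, ζ ^ d = 1 → ζ ≠ 1 → (Polynomial.aeval ζ) P = 1 := by
  refine ⟨1 - C (d : ℚ)⁻¹ * ∑ r ∈ Finset.range d, X ^ r, ?_, ?_⟩
  · have hdc : (d : ℂ) ≠ 0 := Nat.cast_ne_zero.mpr hd
    simp only [map_sub, map_one, map_mul, aeval_C, map_sum, map_pow, aeval_X, one_pow]
    rw [Finset.sum_const, Finset.card_range, nsmul_eq_mul, mul_one]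
    push_cast
    field_simp
    norm_num
  · intro ζ hζd hζ1
    have hg : (∑ r ∈ Finset.range d, ζ ^ r) = 0 := by
      have h2 := geom_sum_mul ζ d
      rw [hζd, sub_self] at h2
      exact (mul_eq_zero.1 h2).resolve_right (sub_ne_zero_of_ne hζ1)
    simp only [map_sub, map_one, map_mul, aeval_C, map_sum, map_pow, aeval_X]
    rw [hg, mul_zero, sub_zero]

lemma exists_poly_inv (d k : ℕ) (hd : d ≠ 0) :
    ∃ P : Polynomial ℚ, ∀ ζ : ℂ, ζ ^ d = 1 → ζ ≠ 1 →
      ((Polynomial.aeval ζ) P) * (1 - ζ) ^ (k + 1) = ζ ^ k := by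
  have hcop : IsCoprime ((1 - X : Polynomial ℚ)) (∑ r ∈ Finset.range d, X ^ r) := by
    have h1 : (1 - X : Polynomial ℚ) = -(X - C 1) := by
      rw [map_one]; ring
    rw [h1]
    apply IsCoprime.neg_left
    rw [(irreducible_X_sub_C (1 : ℚ)).coprime_iff_not_dvd, dvd_iff_isRoot]
    intro hroot
    have : ((∑ r ∈ Finset.range d, X ^ r : Polynomial ℚ).eval 1) = d := by
      simp [eval_finset_sum]
    rw [IsRoot.def] at hroot
    rw [hroot] at this
    exact hd (by exact_mod_cast this.symm)
  obtain ⟨u, v, huv⟩ :=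
    (hcop.pow_left : IsCoprime ((1 - X : Polynomial ℚ) ^ (k + 1)) (∑ r ∈ Finset.range d, X ^ r))
  refine ⟨u * X ^ k, fun ζ hζd hζ1 => ?_⟩
  have hg : (Polynomial.aeval ζ) (∑ r ∈ Finset.range d, X ^ r : Polynomial ℚ) = 0 := by
    have hsum : (Polynomial.aeval ζ) (∑ r ∈ Finset.range d, X ^ r : Polynomial ℚ)
        = ∑ r ∈ Finset.range d, ζ ^ r := by simp
    have h2 := geom_sum_mul ζ d
    rw [hζd, sub_self] at h2
    rw [hsum]
    exact (mul_eq_zero.1 h2).resolve_right (sub_ne_zero_of_ne hζ1)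
  have key := congrArg (Polynomial.aeval ζ) huv
  simp only [map_add, map_mul, map_pow, map_one, map_sub, aeval_X, hg, mul_zero,
    add_zero] at key
  rw [map_mul, map_pow, aeval_X]
  calc (Polynomial.aeval ζ) u * ζ ^ k * (1 - ζ) ^ (k + 1)
      = ((Polynomial.aeval ζ) u * (1 - ζ) ^ (k + 1)) * ζ ^ k := by ring
    _ = ζ ^ k := by rw [key, one_mul]

lemma nilpotent_aux {A : Type*} [CommRing A] [Algebra ℚ A] (x : A) (n : ℕ) (hn : n ≠ 0)
    (hx : x ^ n = 0) :
    ((∑ k ∈ Finset.range n, ((k.factorial : ℚ)⁻¹ • x ^ k)) - 1) ^ n = 0 := by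
  obtain ⟨m, rfl⟩ := Nat.exists_eq_succ_of_ne_zero hn
  have h1 : (∑ k ∈ Finset.range (m + 1), ((k.factorial : ℚ)⁻¹ • x ^ k)) - 1
      = x * ∑ i ∈ Finset.range m, ((((i + 1).factorial : ℚ))⁻¹ • x ^ i) := by
    rw [Finset.sum_range_succ']
    simp only [Nat.factorial_zero, Nat.cast_one, inv_one, pow_zero, one_smul,
      add_sub_cancel_right]
    rw [Finset.mul_sum]
    refine Finset.sum_congr rfl fun i _ => ?_
    rw [pow_succ', mul_smul_comm]
  rw [h1, mul_pow, hx, zero_mul]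

end PartialInverseAux

open PartialInverseAux in
open scoped TensorProduct in
theorem exists_unique_partial_inverse (H : Type*) [Group H] [Fintype H] [IsCyclic H]
    [Nontrivial H] (A : Type*) [CommRing A] [Algebra ℚ A]
    (m : ℕ) (hm : 1 ≤ m)
    (x : Fin m → A) (n : Fin m → ℕ) (hx : ∀ j, x j ^ n j = 0)
    (φ : Fin m → (H →* ℂˣ)) (hφ : ∀ j, φ j ≠ 1) :
    ∃! a : (H →* ℂˣ) → A,
      (∀ h : H, (∃ j, φ j h = 1) →
          (∑ᶠ χ : H →* ℂˣ, ((χ h : ℂ) ⊗ₜ[ℚ] a χ)) = (0 : ℂ ⊗[ℚ] A)) ∧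
      (∀ h : H, (¬ ∃ j, φ j h = 1) →
          (∑ᶠ χ : H →* ℂˣ, ((χ h : ℂ) ⊗ₜ[ℚ] a χ)) *
              ∏ j : Fin m, ((1 : ℂ ⊗[ℚ] A) -
                ((φ j h : ℂ) ⊗ₜ[ℚ] ∑ k ∈ Finset.range (n j),
                  ((k.factorial : ℚ)⁻¹ • x j ^ k))) = 1) := by
  classical
  haveI : Finite (H →* ℂˣ) := finite_char
  letI : Fintype (H →* ℂˣ) := Fintype.ofFinite _
  have hfin : ∀ a : (H →* ℂˣ) → A, ∀ h : H,
      (∑ᶠ χ : H →* ℂˣ, (((χ h : ℂˣ) : ℂ) ⊗ₜ[ℚ] a χ)) = T a h := fun a h => by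
    rw [finsum_eq_sum_of_fintype]; rfl
  by_cases hA : (1 : A) = 0
  · haveI : Subsingleton A := subsingleton_of_zero_eq_one hA.symm
    haveI : Subsingleton (ℂ ⊗[ℚ] A) := by
      refine subsingleton_of_zero_eq_one ?_
      rw [show (1 : ℂ ⊗[ℚ] A) = (1 : ℂ) ⊗ₜ[ℚ] (1 : A) from Algebra.TensorProduct.one_def,
        hA, TensorProduct.tmul_zero]
    exact ⟨0, ⟨fun h _ => Subsingleton.elim _ _, fun h _ => Subsingleton.elim _ _⟩,
      fun a' _ => funext fun χ => Subsingleton.elim _ _⟩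
  -- main case
  have hn : ∀ j, n j ≠ 0 := by
    intro j hj
    apply hA
    have hthis := hx j
    rwa [hj, pow_zero] at hthis
  set u : Fin m → A :=
    fun j => (∑ k ∈ Finset.range (n j), ((k.factorial : ℚ)⁻¹ • x j ^ k)) - 1 with hu
  have hEfun : ∀ j, (∑ k ∈ Finset.range (n j), ((k.factorial : ℚ)⁻¹ • x j ^ k))
      = 1 + u j := fun j => by simp only [hu]; ring
  have hu_pow : ∀ j, u j ^ n j = 0 := fun j => by
    simp only [hu]; exact nilpotent_aux (x j) (n j) (hn j) (hx j)
  set d : Fin m → ℕ := fun j => orderOf (φ j) with hdd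
  have hd : ∀ j, d j ≠ 0 := fun j => (orderOf_pos (φ j)).ne'
  have hzeta_pow : ∀ (j : Fin m) (h : H), ((φ j h : ℂˣ) : ℂ) ^ d j = 1 := by
    intro j h
    have h1 : (φ j) ^ d j = 1 := pow_orderOf_eq_one (φ j)
    have h2 : (φ j h) ^ d j = 1 := by
      rw [← MonoidHom.pow_apply, h1, MonoidHom.one_apply]
    simpa using congrArg (Units.val) h2
  choose Pind hPind1 hPind2 using fun j => exists_poly_ind (d j) (hd j)
  choose P hP using fun j k => exists_poly_inv (d j) k (hd j)
  set b : Fin m → ((H →* ℂˣ) → A) := fun j χ =>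
    ∑ k ∈ Finset.range (n j), fam (φ j) (Pind j * P j k) χ * u j ^ k with hb
  have hTb : ∀ (j : Fin m) (h : H), T (b j) h
      = ∑ k ∈ Finset.range (n j),
          ((Polynomial.aeval ((φ j h : ℂˣ) : ℂ)) (Pind j * P j k)) ⊗ₜ[ℚ] (u j ^ k) := by
    intro j h
    calc T (b j) h
        = ∑ k ∈ Finset.range (n j),
            T (fun χ => fam (φ j) (Pind j * P j k) χ * u j ^ k) h :=
          T_sum (Finset.range (n j)) (fun k χ => fam (φ j) (Pind j * P j k) χ * u j ^ k) h
      _ = _ := Finset.sum_congr rfl fun k _ => by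
          rw [T_mulRight, T_fam, Algebra.TensorProduct.tmul_mul_tmul, mul_one, one_mul]
  have hTb_ker : ∀ (j : Fin m) (h : H), φ j h = 1 → T (b j) h = 0 := by
    intro j h hjh
    rw [hTb j h]
    refine Finset.sum_eq_zero fun k _ => ?_
    have hval : ((φ j h : ℂˣ) : ℂ) = 1 := by rw [hjh]; simp
    rw [map_mul, hval, hPind1 j, zero_mul, TensorProduct.zero_tmul]
  have hTb_inv : ∀ (j : Fin m) (h : H), φ j h ≠ 1 →
      T (b j) h * ((1 : ℂ ⊗[ℚ] A) - (((φ j h : ℂˣ) : ℂ) ⊗ₜ[ℚ]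
        ∑ k ∈ Finset.range (n j), ((k.factorial : ℚ)⁻¹ • x j ^ k))) = 1 := by
    intro j h hne
    set ζ : ℂ := ((φ j h : ℂˣ) : ℂ) with hzeta
    have hζ1 : ζ ≠ 1 := by
      intro hcon
      exact hne (Units.ext (by rw [← hzeta, hcon, Units.val_one]))
    have hζd : ζ ^ d j = 1 := by rw [hzeta]; exact hzeta_pow j h
    have hc : (1 : ℂ) - ζ ≠ 0 := sub_ne_zero_of_ne (Ne.symm hζ1)
    set c : ℂ := ((1 : ℂ) - ζ)⁻¹ with hcdef
    have hcval : c * (1 - ζ) = 1 := inv_mul_cancel₀ hc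
    have haev : ∀ k : ℕ, (Polynomial.aeval ζ) (Pind j * P j k) = ζ ^ k * c ^ (k + 1) := by
      intro k
      have hpow : ((1 : ℂ) - ζ) ^ (k + 1) ≠ 0 := pow_ne_zero _ hc
      have hPk := hP j k ζ hζd hζ1
      rw [map_mul, hPind2 j ζ hζd hζ1, one_mul, hcdef, inv_pow, ← hPk, mul_assoc,
        mul_inv_cancel₀ hpow, mul_one]
    have hval : T (b j) h
        = ∑ k ∈ Finset.range (n j), ((ζ ^ k * c ^ (k + 1)) ⊗ₜ[ℚ] (u j ^ k)) := by
      rw [hTb j h]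
      exact Finset.sum_congr rfl fun k _ => by rw [haev k]
    rw [hval, Finset.sum_mul]
    have hterm : ∀ k : ℕ, ((ζ ^ k * c ^ (k + 1)) ⊗ₜ[ℚ] (u j ^ k)) *
        ((1 : ℂ ⊗[ℚ] A) - (ζ ⊗ₜ[ℚ]
          ∑ k ∈ Finset.range (n j), ((k.factorial : ℚ)⁻¹ • x j ^ k)))
        = ((ζ ^ k * c ^ k) ⊗ₜ[ℚ] (u j ^ k))
          - ((ζ ^ (k + 1) * c ^ (k + 1)) ⊗ₜ[ℚ] (u j ^ (k + 1))) := by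
      intro k
      have hsc3 : ζ ^ k * c ^ (k + 1) - ζ ^ (k + 1) * c ^ (k + 1) = ζ ^ k * c ^ k := by
        linear_combination (ζ ^ k * c ^ k) * hcval
      rw [mul_sub, mul_one, hEfun j, Algebra.TensorProduct.tmul_mul_tmul, mul_add, mul_one,
        ← pow_succ, TensorProduct.tmul_add,
        show ζ ^ k * c ^ (k + 1) * ζ = ζ ^ (k + 1) * c ^ (k + 1) from by ring,
        ← hsc3, TensorProduct.sub_tmul]
      abel
    rw [Finset.sum_congr rfl fun k _ => hterm k,
      Finset.sum_range_sub' (fun k => (ζ ^ k * c ^ k) ⊗ₜ[ℚ] (u j ^ k)) (n j),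
      hu_pow j, TensorProduct.tmul_zero, sub_zero, pow_zero, pow_zero, pow_zero, one_mul]
    exact (Algebra.TensorProduct.one_def).symm
  obtain ⟨a, hTa⟩ := exists_T_prod b
  have cond1 : ∀ h : H, (∃ j, φ j h = 1) → T a h = 0 := by
    intro h hK
    obtain ⟨j, hj⟩ := hK
    rw [hTa h]
    exact Finset.prod_eq_zero (Finset.mem_univ j) (hTb_ker j h hj)
  have cond2 : ∀ h : H, (¬ ∃ j, φ j h = 1) →
      T a h * ∏ j : Fin m, ((1 : ℂ ⊗[ℚ] A) - (((φ j h : ℂˣ) : ℂ) ⊗ₜ[ℚ]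
        ∑ k ∈ Finset.range (n j), ((k.factorial : ℚ)⁻¹ • x j ^ k))) = 1 := by
    intro h hK
    push_neg at hK
    rw [hTa h, ← Finset.prod_mul_distrib]
    exact Finset.prod_eq_one fun j _ => hTb_inv j h (hK j)
  refine ⟨a, ⟨fun h hK => by rw [hfin a h]; exact cond1 h hK,
    fun h hK => by rw [hfin a h]; exact cond2 h hK⟩, ?_⟩
  rintro a' ⟨c1', c2'⟩
  have hTeq : ∀ h : H, T a' h = T a h := by
    intro h
    by_cases hK : ∃ j, φ j h = 1
    · have h0' : T a' h = 0 := by rw [← hfin a' h]; exact c1' h hK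
      rw [h0', cond1 h hK]
    · have h1 : T a' h * ∏ j : Fin m, ((1 : ℂ ⊗[ℚ] A) - (((φ j h : ℂˣ) : ℂ) ⊗ₜ[ℚ]
          ∑ k ∈ Finset.range (n j), ((k.factorial : ℚ)⁻¹ • x j ^ k))) = 1 := by
        rw [← hfin a' h]; exact c2' h hK
      have h2 := cond2 h hK
      calc T a' h = T a' h * (T a h * ∏ j : Fin m, ((1 : ℂ ⊗[ℚ] A) -
              (((φ j h : ℂˣ) : ℂ) ⊗ₜ[ℚ]
                ∑ k ∈ Finset.range (n j), ((k.factorial : ℚ)⁻¹ • x j ^ k)))) := by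
            rw [h2, mul_one]
        _ = T a h * (T a' h * ∏ j : Fin m, ((1 : ℂ ⊗[ℚ] A) -
              (((φ j h : ℂˣ) : ℂ) ⊗ₜ[ℚ]
                ∑ k ∈ Finset.range (n j), ((k.factorial : ℚ)⁻¹ • x j ^ k)))) := by
            ring
        _ = T a h := by rw [h1, mul_one]
  have hz : (fun χ : H →* ℂˣ => a' χ - a χ) = 0 :=
    T_eq_zero _ fun h => by rw [T_sub, hTeq h, sub_self]
  funext χ
  have hzχ := congrFun hz χ
  simp only [Pi.zero_apply] at hzχ
  exact sub_eq_zero.mp hzχ
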